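/- Let d be a positive integer with d ≡ 1 (mod 4), and let ω(d) denote the number of distinct prime divisors of d. Consider the discriminant quadratic form q_T of the even binary lattice T with Gram matrix [[2,1],[1,(1-d)/2]], namely the map q_T : ℤ/dℤ → ℚ/2ℤ given on the class of an integer x by q_T(x) = -2x²/d mod 2ℤ. Then the group O(q_T) of additive automorphisms φ of ℤ/dℤ with q_T ∘ φ = q_T has order 2^{ω(d)}. -/

import Mathlib

/-- The discriminant quadratic form of the even binary lattice with Gram matrix
`[[2,1],[1,(1-d)/2]]` (for `d ≡ 1 mod 4`) on its discriminant group `ℤ/dℤ`,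
with values in `ℚ/2ℤ = AddCircle (2 : ℚ)`: `q_T(x) = -2x²/d mod 2ℤ`. -/
noncomputable def qT (d : ℕ) (x : ZMod d) : AddCircle (2 : ℚ) :=
  ((-2 * (x.val : ℚ) ^ 2 / d : ℚ) : AddCircle (2 : ℚ))

lemma qT_eq_iff (d : ℕ) (hd : 0 < d) (a b : ZMod d) :
    qT d a = qT d b ↔ a ^ 2 = b ^ 2 := by
  haveI : NeZero d := ⟨hd.ne'⟩
  have hd0 : (d : ℚ) ≠ 0 := Nat.cast_ne_zero.mpr hd.ne'
  rw [qT, qT, QuotientAddGroup.eq, AddSubgroup.mem_zmultiples_iff]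
  constructor
  · rintro ⟨k, hk⟩
    have hq : ((a.val : ℚ)^2 - (b.val : ℚ)^2) = d * k := by
      rw [zsmul_eq_mul] at hk
      field_simp at hk
      linarith
    have hz : ((a.val : ℤ)^2 - (b.val : ℤ)^2 : ℤ) = d * k := by exact_mod_cast hq
    have h0 : ((((a.val : ℤ)^2 - (b.val : ℤ)^2 : ℤ)) : ZMod d) = 0 :=
      (ZMod.intCast_zmod_eq_zero_iff_dvd _ d).mpr ⟨k, hz⟩
    push_cast at h0
    rw [ZMod.natCast_val, ZMod.natCast_val, ZMod.cast_id, ZMod.cast_id] at h0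
    linear_combination h0
  · intro h
    have h0 : ((((a.val : ℤ)^2 - (b.val : ℤ)^2 : ℤ)) : ZMod d) = 0 := by
      push_cast
      rw [ZMod.natCast_val, ZMod.natCast_val, ZMod.cast_id, ZMod.cast_id]
      rw [h]; ring
    obtain ⟨k, hk⟩ := (ZMod.intCast_zmod_eq_zero_iff_dvd _ d).mp h0
    refine ⟨k, ?_⟩
    have hq : ((a.val : ℚ)^2 - (b.val : ℚ)^2) = d * k := by exact_mod_cast congrArg (Int.cast : ℤ → ℚ) hk
    rw [zsmul_eq_mul]
    field_simp
    linarith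

lemma sq_eq_one_prime_pow {p n : ℕ} (hp : p.Prime) (hn : 0 < n) (hodd : Odd (p ^ n))
    (x : ZMod (p ^ n)) (hx : x ^ 2 = 1) : x = 1 ∨ x = -1 := by
  haveI : NeZero (p ^ n) := ⟨(pow_pos hp.pos n).ne'⟩
  have hp2 : p ≠ 2 := by
    rintro rfl
    exact (Nat.not_odd_iff_even.mpr (Nat.even_pow.mpr ⟨even_two, hn.ne'⟩)) hodd
  have hpz : Prime (p : ℤ) := Nat.prime_iff_prime_int.mp hp
  set a : ℤ := (x.val : ℤ) with ha
  have hdvd : ((p : ℤ) ^ n) ∣ (a - 1) * (a + 1) := by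
    have h0 : (((a - 1) * (a + 1) : ℤ) : ZMod (p ^ n)) = 0 := by
      push_cast [ha]
      rw [ZMod.natCast_val, ZMod.cast_id]
      linear_combination hx
    have := (ZMod.intCast_zmod_eq_zero_iff_dvd _ _).mp h0
    exact_mod_cast this
  have hnot : ¬ ((p : ℤ) ∣ a - 1 ∧ (p : ℤ) ∣ a + 1) := by
    rintro ⟨h1, h2⟩
    have h3 : (p : ℤ) ∣ 2 := by
      have := dvd_sub h2 h1
      simpa using this
    have h4 : p ∣ 2 := Int.ofNat_dvd.mp (by exact_mod_cast h3)
    exact hp2 ((Nat.prime_dvd_prime_iff_eq hp Nat.prime_two).mp h4)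
  have key : ((p : ℤ) ^ n ∣ a - 1) ∨ ((p : ℤ) ^ n ∣ a + 1) := by
    by_cases h1 : (p : ℤ) ∣ a - 1
    · left
      have h2 : ¬ (p : ℤ) ∣ a + 1 := fun h => hnot ⟨h1, h⟩
      have hc : IsCoprime ((p : ℤ) ^ n) (a + 1) :=
        (hpz.coprime_iff_not_dvd.mpr h2).pow_left
      exact hc.dvd_of_dvd_mul_right hdvd
    · right
      have hc : IsCoprime ((p : ℤ) ^ n) (a - 1) :=
        (hpz.coprime_iff_not_dvd.mpr h1).pow_left
      exact hc.dvd_of_dvd_mul_left hdvd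
  rcases key with h | h
  · left
    have : ((a - 1 : ℤ) : ZMod (p ^ n)) = 0 :=
      (ZMod.intCast_zmod_eq_zero_iff_dvd _ _).mpr (by exact_mod_cast h)
    push_cast [ha] at this
    rw [ZMod.natCast_val, ZMod.cast_id] at this
    linear_combination this
  · right
    have : ((a + 1 : ℤ) : ZMod (p ^ n)) = 0 :=
      (ZMod.intCast_zmod_eq_zero_iff_dvd _ _).mpr (by exact_mod_cast h)
    push_cast [ha] at this
    rw [ZMod.natCast_val, ZMod.cast_id] at this
    linear_combination this

lemma card_sq_eq_one_prime_pow {p n : ℕ} (hp : p.Prime) (hn : 0 < n) (hodd : Odd (p ^ n)) :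
    Nat.card {x : ZMod (p ^ n) // x ^ 2 = 1} = 2 := by
  have hp2 : p ≠ 2 := by
    rintro rfl
    exact (Nat.not_odd_iff_even.mpr (Nat.even_pow.mpr ⟨even_two, hn.ne'⟩)) hodd
  have h3 : 2 < p ^ n := by
    have : 3 ≤ p := (Nat.Prime.two_le hp).lt_of_ne (Ne.symm hp2)
    calc 2 < 3 := by norm_num
    _ ≤ p := this
    _ ≤ p ^ n := Nat.le_self_pow hn.ne' p
  have hset : {x : ZMod (p ^ n) | x ^ 2 = 1} = {1, -1} := by
    ext x
    constructor
    · exact fun hx => sq_eq_one_prime_pow hp hn hodd x hx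
    · rintro (rfl | rfl) <;> simp [Set.mem_setOf_eq]
  have : Nat.card {x : ZMod (p ^ n) | x ^ 2 = 1} = 2 := by
    haveI : Fact (2 < p ^ n) := ⟨h3⟩
    rw [hset, Nat.card_coe_set_eq, Set.ncard_pair (ZMod.neg_one_ne_one).symm]
  exact this

lemma card_sq_eq_one (d : ℕ) (hodd : Odd d) :
    Nat.card {x : ZMod d // x ^ 2 = 1} = 2 ^ d.primeFactors.card := by
  induction d using Nat.recOnPosPrimePosCoprime with
  | prime_pow p n hp hn =>
    rw [card_sq_eq_one_prime_pow hp hn hodd,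
      Nat.primeFactors_prime_pow hn.ne' hp, Finset.card_singleton, pow_one]
  | zero => exact absurd hodd (by simp [Nat.odd_iff])
  | one =>
    haveI : Unique {x : ZMod 1 // x ^ 2 = 1} :=
      ⟨⟨⟨1, one_pow 2⟩⟩, fun a => Subtype.ext (Subsingleton.elim _ _)⟩
    simp [Nat.card_unique]
  | coprime a b ha hb hab IHa IHb =>
    obtain ⟨hoa, hob⟩ := (Nat.odd_mul).mp hodd
    have e0 : ZMod (a * b) ≃+* ZMod a × ZMod b := ZMod.chineseRemainder hab
    have e1 : {x : ZMod (a * b) // x ^ 2 = 1} ≃ {y : ZMod a × ZMod b // y ^ 2 = 1} :=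
      e0.toEquiv.subtypeEquiv fun x =>
        ⟨fun h => by rw [show e0.toEquiv x = e0 x from rfl, ← map_pow, h, map_one],
         fun h => e0.injective (by rw [map_pow, map_one]; exact h)⟩
    have e2 : {y : ZMod a × ZMod b // y ^ 2 = 1} ≃
        {u : ZMod a // u ^ 2 = 1} × {v : ZMod b // v ^ 2 = 1} :=
      ((Equiv.refl _).subtypeEquiv fun y => by
        simp [Prod.ext_iff, Prod.pow_fst, Prod.pow_snd]).trans
      (Equiv.subtypeProdEquivProd)
    rw [Nat.card_congr (e1.trans e2), Nat.card_prod, IHa hoa, IHb hob,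
      hab.primeFactors_mul, Finset.card_union_of_disjoint hab.disjoint_primeFactors,
      pow_add]

/-- For `d ≡ 1 (mod 4)`, the orthogonal group of the discriminant form `q_T`
has order `2^{ω(d)}`. -/
theorem card_orthogonal_group_discriminant_form_T (d : ℕ) (hd : 0 < d)
    (hd4 : d % 4 = 1) :
    Nat.card {φ : ZMod d ≃+ ZMod d // ∀ x, qT d (φ x) = qT d x} =
      2 ^ d.primeFactors.card := by
  have hodd : Odd d := by
    rw [Nat.odd_iff]
    omega
  have hmul : ∀ (φ : AddAut (ZMod d)) (x : ZMod d), φ x = φ 1 * x := by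
    intro φ x
    rw [mul_comm, ← x.intCast_zmod_cast, ← zsmul_eq_mul, ← map_zsmul, zsmul_one]
  have key : ∀ φ : AddAut (ZMod d),
      (∀ x, qT d (φ x) = qT d x) ↔ (φ 1) ^ 2 = 1 := by
    intro φ
    constructor
    · intro h
      have := (qT_eq_iff d hd (φ 1) 1).mp (h 1)
      simpa using this
    · intro h x
      refine (qT_eq_iff d hd (φ x) x).mpr ?_
      rw [hmul φ x, mul_pow, h, one_mul]
  have E1 : {φ : ZMod d ≃+ ZMod d // ∀ x, qT d (φ x) = qT d x} ≃
      {x : ZMod d // x ^ 2 = 1} :=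
    { toFun := fun φ => ⟨φ.1 1, (key φ.1).mp φ.2⟩
      invFun := fun x =>
        ⟨(ZMod.AddAutEquivUnits d).symm
            (Additive.ofMul (Units.mkOfMulEqOne x.1 x.1 (by rw [← sq]; exact x.2))),
          (key _).mpr (by
            simp only [ZMod.AddAutEquivUnits_symm_apply]
            show (AddAut.mulLeft _ : AddAut (ZMod d)) 1 ^ 2 = 1
            have : ((Units.mkOfMulEqOne x.1 x.1 (by rw [← sq]; exact x.2) : (ZMod d)ˣ) : ZMod d) * 1 = x.1 * 1 := rfl
            show ((Units.mkOfMulEqOne x.1 x.1 (by rw [← sq]; exact x.2) : (ZMod d)ˣ) • (1 : ZMod d)) ^ 2 = 1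
            simp [Units.smul_def, x.2])⟩
      left_inv := fun φ => by
        apply Subtype.ext
        ext y
        show ((ZMod.AddAutEquivUnits d).symm _ : AddAut (ZMod d)) y = φ.1 y
        simp only [ZMod.AddAutEquivUnits_symm_apply]
        show (Units.mkOfMulEqOne (φ.1 1) (φ.1 1) _ : (ZMod d)ˣ) • y = φ.1 y
        rw [Units.smul_def]
        show (φ.1 1) * y = φ.1 y
        exact (hmul φ.1 y).symm
      right_inv := fun x => by
        apply Subtype.ext
        show ((ZMod.AddAutEquivUnits d).symm _ : AddAut (ZMod d)) 1 = x.1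
        simp only [ZMod.AddAutEquivUnits_symm_apply]
        show (Units.mkOfMulEqOne x.1 x.1 _ : (ZMod d)ˣ) • (1 : ZMod d) = x.1
        rw [Units.smul_def]
        show x.1 * 1 = x.1
        exact mul_one x.1 }
  rw [Nat.card_congr E1, card_sq_eq_one d hodd]
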